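/- The discrete fractional Laplacian commutes with the central difference operator in the weak sense: for all u, v ∈ ℓ²(ℤ), ⟨𝔻^α(Du), v⟩ = -⟨u, 𝔻^α(Dv)⟩ = ⟨D(𝔻^α u), v⟩, where D is the central difference operator. -/
import Mathlib
set_option maxHeartbeats 1000000

/-- Discrete fractional Laplacian. -/
noncomputable def fracLap (cα α dx : ℝ) (u : ℤ → ℝ) (j : ℤ) : ℝ :=
  (cα / dx ^ α) * ∑' k : {k : ℤ // k ≠ j},
    (u k - u j) * (1 - (-1 : ℝ) ^ (j - (k : ℤ))) / ((|(k : ℤ) - j| : ℤ) : ℝ) ^ (1 + α)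

/-- Central difference operator. -/
noncomputable def Dc (dx : ℝ) (v : ℤ → ℝ) (j : ℤ) : ℝ := (v (j + 1) - v (j - 1)) / (2 * dx)

/-- Scaled discrete inner product. -/
noncomputable def ip (dx : ℝ) (v w : ℤ → ℝ) : ℝ := dx * ∑' j : ℤ, v j * w j


noncomputable def Kk (α : ℝ) (m : ℤ) : ℝ := (1 - (-1 : ℝ) ^ m) / ((|m| : ℤ) : ℝ) ^ (1 + α)

lemma neg_one_zpow_cases (m : ℤ) : (-1 : ℝ) ^ m = 1 ∨ (-1 : ℝ) ^ m = -1 := by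
  rcases Int.even_or_odd m with h | h
  · exact Or.inl (h.neg_one_zpow)
  · exact Or.inr (h.neg_one_zpow)

lemma Kk_zero (α : ℝ) : Kk α 0 = 0 := by simp [Kk]

lemma Kk_neg (α : ℝ) (m : ℤ) : Kk α (-m) = Kk α m := by
  unfold Kk
  rw [abs_neg]
  congr 1
  rw [zpow_neg]
  rcases neg_one_zpow_cases m with h | h <;> rw [h] <;> norm_num

lemma Kk_nonneg (α : ℝ) (m : ℤ) : 0 ≤ Kk α m := by
  apply div_nonneg
  · rcases neg_one_zpow_cases m with h | h <;> rw [h] <;> norm_num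
  · exact Real.rpow_nonneg (by positivity) _

lemma Kk_le_two (α : ℝ) (hα : 0 ≤ α) (m : ℤ) : Kk α m ≤ 2 := by
  rcases eq_or_ne m 0 with rfl | hm
  · rw [Kk_zero]; norm_num
  · have h1 : (1 : ℝ) ≤ ((|m| : ℤ) : ℝ) := by
      have := Int.one_le_abs hm
      exact_mod_cast this
    have hden : (1 : ℝ) ≤ ((|m| : ℤ) : ℝ) ^ (1 + α) :=
      Real.one_le_rpow h1 (by linarith)
    have hnum : (1 - (-1 : ℝ) ^ m) ≤ 2 := by
      rcases neg_one_zpow_cases m with h | h <;> rw [h] <;> norm_num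
    have hnum0 : (0 : ℝ) ≤ 1 - (-1 : ℝ) ^ m := by
      rcases neg_one_zpow_cases m with h | h <;> rw [h] <;> norm_num
    calc Kk α m ≤ 1 - (-1 : ℝ) ^ m := div_le_self hnum0 hden
      _ ≤ 2 := hnum

lemma Kk_le_bound (α : ℝ) (hα : 1 < 1 + α) (m : ℤ) :
    Kk α m ≤ 2 * (1 / |(m : ℝ)| ^ (1 + α)) := by
  have hc : ((|m| : ℤ) : ℝ) = |(m : ℝ)| := by push_cast; ring
  rcases eq_or_ne m 0 with rfl | hm
  · simp [Kk_zero, Real.zero_rpow (by linarith : (1:ℝ) + α ≠ 0)]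
  · have h0 : (0 : ℝ) < |(m : ℝ)| ^ (1 + α) := by
      apply Real.rpow_pos_of_pos
      simpa using hm
    have hnum : (1 - (-1 : ℝ) ^ m) ≤ 2 := by
      rcases neg_one_zpow_cases m with h | h <;> rw [h] <;> norm_num
    rw [Kk, hc, mul_one_div]
    exact (div_le_div_iff_of_pos_right h0).mpr hnum

lemma Kk_summable (α : ℝ) (hα : 1 < 1 + α) : Summable (Kk α) := by
  have h := (Real.summable_one_div_int_add_rpow 0 (1 + α)).mpr hα
  simp only [add_zero] at h
  exact Summable.of_nonneg_of_le (Kk_nonneg α) (Kk_le_bound α hα) (h.mul_left 2)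

lemma sq_of_memℓp {u : ℤ → ℝ} (hu : Memℓp u 2) : Summable fun j => u j ^ 2 := by
  have h := (memℓp_gen_iff (p := 2) (by norm_num)).mp hu
  refine h.congr fun j => ?_
  rw [ENNReal.toReal_ofNat, Real.rpow_two, Real.norm_eq_abs, sq_abs]

lemma sq_shift {u : ℤ → ℝ} (hu : Summable fun j => u j ^ 2) (a : ℤ) :
    Summable fun j => u (j + a) ^ 2 :=
  ((Equiv.addRight a).summable_iff (f := fun x => u x ^ 2)).mpr hu

lemma absmul_summable {u v : ℤ → ℝ} (hu : Summable fun j => u j ^ 2)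
    (hv : Summable fun j => v j ^ 2) (a b : ℤ) :
    Summable fun j => |u (j + a)| * |v (j + b)| := by
  refine Summable.of_nonneg_of_le (fun j => by positivity) (fun j => ?_)
    (((sq_shift hu a).add (sq_shift hv b)).div_const 2)
  have := two_mul_le_add_sq (|u (j + a)|) (|v (j + b)|)
  rw [sq_abs, sq_abs] at this
  linarith

lemma mul_summable {u v : ℤ → ℝ} (hu : Summable fun j => u j ^ 2)
    (hv : Summable fun j => v j ^ 2) (a b : ℤ) :
    Summable fun j => u (j + a) * v (j + b) := by
  apply Summable.of_norm
  refine (absmul_summable hu hv a b).congr fun j => ?_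
  rw [Real.norm_eq_abs, abs_mul]

lemma absmul_tsum_le {u v : ℤ → ℝ} (hu : Summable fun j => u j ^ 2)
    (hv : Summable fun j => v j ^ 2) (a b : ℤ) :
    ∑' j, |u (j + a)| * |v (j + b)| ≤ ((∑' j, u j ^ 2) + ∑' j, v j ^ 2) / 2 := by
  have h1 : ∑' j, |u (j + a)| * |v (j + b)| ≤ ∑' j, (u (j + a) ^ 2 + v (j + b) ^ 2) / 2 := by
    apply Summable.tsum_le_tsum _ (absmul_summable hu hv a b)
      (((sq_shift hu a).add (sq_shift hv b)).div_const 2)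
    intro j
    have := two_mul_le_add_sq (|u (j + a)|) (|v (j + b)|)
    rw [sq_abs, sq_abs] at this
    linarith
  refine h1.trans_eq ?_
  rw [tsum_div_const, Summable.tsum_add (sq_shift hu a) (sq_shift hv b)]
  congr 2
  · exact (Equiv.addRight a).tsum_eq (fun x => u x ^ 2)
  · exact (Equiv.addRight b).tsum_eq (fun x => v x ^ 2)

def shEquiv : ℤ × ℤ ≃ ℤ × ℤ where
  toFun p := (p.1 + p.2, p.2)
  invFun p := (p.1 - p.2, p.2)
  left_inv p := by simp
  right_inv p := by simp

def diagEquiv : ℤ × ℤ ≃ ℤ × ℤ where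
  toFun p := (p.1, p.1 - p.2)
  invFun p := (p.1, p.1 - p.2)
  left_inv p := by simp
  right_inv p := by simp

lemma summable_big_abs {α : ℝ} (hK : Summable (Kk α)) {u v : ℤ → ℝ}
    (hu : Summable fun j => u j ^ 2) (hv : Summable fun j => v j ^ 2) (c : ℤ) :
    Summable fun p : ℤ × ℤ => |u p.1| * |v p.2| * Kk α (p.1 - p.2 + c) := by
  have hfib : ∀ m : ℤ, Summable fun j : ℤ => |u (j + m)| * |v (j + 0)| * Kk α (m + c) :=
    fun m => (absmul_summable hu hv m 0).mul_right _
  have hKB : Summable fun m : ℤ =>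
      ((∑' j, u j ^ 2) + ∑' j, v j ^ 2) / 2 * Kk α (m + c) := by
    have h := ((Equiv.addRight c).summable_iff (f := Kk α)).mpr hK
    exact h.mul_left _
  have houter : Summable fun m : ℤ => ∑' j : ℤ, |u (j + m)| * |v (j + 0)| * Kk α (m + c) := by
    refine Summable.of_nonneg_of_le
      (fun m => tsum_nonneg fun j => mul_nonneg (by positivity) (Kk_nonneg α _))
      (fun m => ?_) hKB
    rw [tsum_mul_right]
    exact mul_le_mul_of_nonneg_right (absmul_tsum_le hu hv m 0) (Kk_nonneg α _)
  have hF' : Summable fun q : ℤ × ℤ => |u (q.2 + q.1)| * |v (q.2 + 0)| * Kk α (q.1 + c) := by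
    rw [summable_prod_of_nonneg (fun p => mul_nonneg (by positivity) (Kk_nonneg α _))]
    exact ⟨fun m => (hfib m).congr fun j => rfl, houter.congr fun m => rfl⟩
  apply shEquiv.summable_iff.mp
  refine hF'.congr fun q => ?_
  simp only [Function.comp_apply, shEquiv, Equiv.coe_fn_mk, add_zero]
  congr 3
  · ring
  · ring

lemma summable_big {α : ℝ} (hK : Summable (Kk α)) {u v : ℤ → ℝ}
    (hu : Summable fun j => u j ^ 2) (hv : Summable fun j => v j ^ 2) (c : ℤ) :
    Summable fun p : ℤ × ℤ => u p.1 * v p.2 * Kk α (p.1 - p.2 + c) := by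
  apply Summable.of_norm
  refine (summable_big_abs hK hu hv c).congr fun p => ?_
  rw [Real.norm_eq_abs, abs_mul, abs_mul, abs_of_nonneg (Kk_nonneg α _)]

lemma summable_diag {α : ℝ} (hK : Summable (Kk α)) {u v : ℤ → ℝ}
    (hu : Summable fun j => u j ^ 2) (hv : Summable fun j => v j ^ 2) :
    Summable fun p : ℤ × ℤ => u p.1 * v p.1 * Kk α (p.1 - p.2) := by
  apply Summable.of_norm
  apply diagEquiv.summable_iff.mp
  have h1 : Summable fun j : ℤ => |u j| * |v j| := by simpa using absmul_summable hu hv 0 0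
  have habs := Summable.mul_of_nonneg (f := fun j : ℤ => |u j| * |v j|) (g := Kk α)
    h1 hK (fun j => by positivity) (Kk_nonneg α)
  refine habs.congr fun p => ?_
  simp only [Function.comp_apply, diagEquiv, Equiv.coe_fn_mk, Real.norm_eq_abs,
    abs_mul, abs_of_nonneg (Kk_nonneg α _)]
  congr 2
  omega

lemma fracLap_eq (cα α dx : ℝ) (f : ℤ → ℝ) (j : ℤ) :
    fracLap cα α dx f j = (cα / dx ^ α) * ∑' k : ℤ, (f k - f j) * Kk α (j - k) := by
  unfold fracLap
  congr 1
  have hterm : ∀ k : ℤ, (f k - f j) * (1 - (-1 : ℝ) ^ (j - k)) / ((|k - j| : ℤ) : ℝ) ^ (1 + α)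
      = (f k - f j) * Kk α (j - k) := by
    intro k
    rw [Kk, abs_sub_comm k j, mul_div_assoc]
  have hsupp : Function.support (fun k : ℤ => (f k - f j) * Kk α (j - k)) ⊆ {k : ℤ | k ≠ j} := by
    intro k hk
    simp only [Set.mem_setOf_eq]
    rintro rfl
    simp at hk
  calc ∑' k : {k : ℤ // k ≠ j},
        (f k - f j) * (1 - (-1 : ℝ) ^ (j - (k : ℤ))) / ((|(k : ℤ) - j| : ℤ) : ℝ) ^ (1 + α)
      = ∑' k : {k : ℤ // k ≠ j}, (f (k : ℤ) - f j) * Kk α (j - (k : ℤ)) :=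
        tsum_congr fun k => hterm k
    _ = ∑' k : ℤ, (f k - f j) * Kk α (j - k) := tsum_subtype_eq_of_support_subset hsupp

lemma ip_fracLap (cα α dx : ℝ) {f g : ℤ → ℝ} (hK : Summable (Kk α))
    (hf : Summable fun j => f j ^ 2) (hg : Summable fun j => g j ^ 2) :
    ip dx (fracLap cα α dx f) g = dx * (cα / dx ^ α) *
      ((∑' p : ℤ × ℤ, f p.1 * g p.2 * Kk α (p.1 - p.2)) -
        (∑' j, f j * g j) * ∑' m, Kk α m) := by
  set P1 : ℤ × ℤ → ℝ := fun p => f p.2 * Kk α (p.1 - p.2) * g p.1 with hP1def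
  set P2 : ℤ × ℤ → ℝ := fun p => f p.1 * Kk α (p.1 - p.2) * g p.1 with hP2def
  have hP1 : Summable P1 := by
    refine (summable_big hK hg hf 0).congr fun p => ?_
    simp only [hP1def, add_zero]
    ring
  have hP2 : Summable P2 := by
    refine (summable_diag hK hf hg).congr fun p => ?_
    simp only [hP2def]
    ring
  have hT : Summable fun p : ℤ × ℤ => (f p.2 - f p.1) * Kk α (p.1 - p.2) * g p.1 :=
    (hP1.sub hP2).congr fun p => by simp only [hP1def, hP2def]; ring
  have step1 : ip dx (fracLap cα α dx f) g = dx * ((cα / dx ^ α) *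
      ∑' j : ℤ, ∑' k : ℤ, (f k - f j) * Kk α (j - k) * g j) := by
    rw [ip]
    congr 1
    rw [← tsum_mul_left]
    refine tsum_congr fun j => ?_
    rw [fracLap_eq, mul_assoc, ← tsum_mul_right]
  have step2 : ∑' j : ℤ, ∑' k : ℤ, (f k - f j) * Kk α (j - k) * g j =
      ∑' p : ℤ × ℤ, (f p.2 - f p.1) * Kk α (p.1 - p.2) * g p.1 := (Summable.tsum_prod hT).symm
  have step3 : ∑' p : ℤ × ℤ, (f p.2 - f p.1) * Kk α (p.1 - p.2) * g p.1 =
      (∑' p, P1 p) - ∑' p, P2 p := by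
    rw [← Summable.tsum_sub hP1 hP2]
    exact tsum_congr fun p => by simp only [hP1def, hP2def]; ring
  have step4 : ∑' p, P1 p = ∑' p : ℤ × ℤ, f p.1 * g p.2 * Kk α (p.1 - p.2) := by
    rw [← (Equiv.prodComm ℤ ℤ).tsum_eq P1]
    refine tsum_congr fun p => ?_
    simp only [hP1def, Equiv.prodComm_apply, Prod.snd_swap, Prod.fst_swap]
    have hkk : Kk α (p.2 - p.1) = Kk α (p.1 - p.2) := by
      rw [← Kk_neg α (p.1 - p.2)]
      congr 1
      ring
    rw [hkk]
    ring
  have step5 : ∑' p, P2 p = (∑' j, f j * g j) * ∑' m, Kk α m := by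
    rw [Summable.tsum_prod hP2, ← tsum_mul_right]
    refine tsum_congr fun j => ?_
    have : ∀ k : ℤ, P2 (j, k) = (f j * g j) * Kk α (j - k) := fun k => by
      simp only [hP2def]; ring
    rw [tsum_congr this, tsum_mul_left]
    congr 1
    exact (Equiv.subLeft j).tsum_eq (Kk α)
  rw [step1, step2, step3, step4, step5, mul_assoc]

lemma abs_le_sqrt_tsum {u : ℤ → ℝ} (hu : Summable fun j => u j ^ 2) (j : ℤ) :
    |u j| ≤ Real.sqrt (∑' i, u i ^ 2) := by
  have h1 : u j ^ 2 ≤ ∑' i, u i ^ 2 := Summable.le_tsum hu j fun i _ => sq_nonneg _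
  have := Real.sqrt_le_sqrt h1
  rwa [Real.sqrt_sq_eq_abs] at this

lemma summable_K_shift {α : ℝ} (hK : Summable (Kk α)) (c : ℤ) :
    Summable fun k : ℤ => Kk α (c - k) :=
  ((Equiv.subLeft c).summable_iff (f := Kk α)).mpr hK

lemma summable_mul_K {α : ℝ} {u : ℤ → ℝ} (hu : Summable fun j => u j ^ 2)
    (hK : Summable (Kk α)) (a c : ℤ) :
    Summable fun k : ℤ => u (k + a) * Kk α (c - k) := by
  apply Summable.of_norm
  refine Summable.of_nonneg_of_le (fun k => norm_nonneg _) (fun k => ?_)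
    ((summable_K_shift hK c).mul_left (Real.sqrt (∑' i, u i ^ 2)))
  rw [Real.norm_eq_abs, abs_mul, abs_of_nonneg (Kk_nonneg α _)]
  exact mul_le_mul_of_nonneg_right (abs_le_sqrt_tsum hu _) (Kk_nonneg α _)

lemma summable_fracLap_term {α : ℝ} {u : ℤ → ℝ} (hu : Summable fun j => u j ^ 2)
    (hK : Summable (Kk α)) (a : ℤ) (b : ℝ) (c : ℤ) :
    Summable fun k : ℤ => (u (k + a) - b) * Kk α (c - k) := by
  have e2 : Summable fun k : ℤ => b * Kk α (c - k) := (summable_K_shift hK c).mul_left b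
  exact ((summable_mul_K hu hK a c).sub e2).congr fun k => by ring

lemma fracLap_shift {cα α dx : ℝ} {u : ℤ → ℝ} (hu : Summable fun j => u j ^ 2)
    (hK : Summable (Kk α)) (j a : ℤ) :
    fracLap cα α dx u (j + a) =
      (cα / dx ^ α) * ∑' k : ℤ, (u (k + a) - u (j + a)) * Kk α (j - k) := by
  rw [fracLap_eq]
  congr 1
  rw [← (Equiv.addRight a).tsum_eq (fun k => (u k - u (j + a)) * Kk α (j + a - k))]
  refine tsum_congr fun k => ?_
  simp only [Equiv.coe_addRight]
  congr 2
  ring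

lemma fracLap_Dc_comm (cα α dx : ℝ) (hdx : dx ≠ 0) {u : ℤ → ℝ}
    (hu : Summable fun j => u j ^ 2) (hK : Summable (Kk α)) (j : ℤ) :
    fracLap cα α dx (Dc dx u) j = Dc dx (fracLap cα α dx u) j := by
  have h1 : Summable fun k : ℤ => (u (k + 1) - u (j + 1)) * Kk α (j - k) :=
    summable_fracLap_term hu hK 1 (u (j + 1)) j
  have h2 : Summable fun k : ℤ => (u (k + -1) - u (j + -1)) * Kk α (j - k) :=
    summable_fracLap_term hu hK (-1) (u (j + -1)) j
  have key : ∑' k : ℤ, (Dc dx u k - Dc dx u j) * Kk α (j - k)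
      = ((∑' k : ℤ, (u (k + 1) - u (j + 1)) * Kk α (j - k)) -
          ∑' k : ℤ, (u (k + -1) - u (j + -1)) * Kk α (j - k)) / (2 * dx) := by
    rw [← Summable.tsum_sub h1 h2, ← tsum_div_const]
    refine tsum_congr fun k => ?_
    have hk1 : k + (-1 : ℤ) = k - 1 := by ring
    have hj1 : j + (-1 : ℤ) = j - 1 := by ring
    rw [hk1, hj1, Dc, Dc]
    field_simp
    ring
  rw [show j + (-1 : ℤ) = j - 1 by ring] at key
  rw [fracLap_eq, key, Dc]
  have ha1 := fracLap_shift (cα := cα) (dx := dx) hu hK j 1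
  have ha2 := fracLap_shift (cα := cα) (dx := dx) hu hK j (-1)
  have hj1 : j + (-1 : ℤ) = j - 1 := by ring
  rw [hj1] at ha2
  rw [ha1, ha2]
  ring

def sh1 (c : ℤ) : ℤ × ℤ ≃ ℤ × ℤ where
  toFun p := (p.1 + c, p.2)
  invFun p := (p.1 - c, p.2)
  left_inv p := by simp
  right_inv p := by simp

lemma ip_comm (dx : ℝ) (f g : ℤ → ℝ) : ip dx f g = ip dx g f := by
  rw [ip, ip]
  congr 1
  exact tsum_congr fun j => mul_comm _ _

lemma sq_Dc {dx : ℝ} (hdx : dx ≠ 0) {u : ℤ → ℝ} (hu : Summable fun j => u j ^ 2) :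
    Summable fun j => Dc dx u j ^ 2 := by
  refine Summable.of_nonneg_of_le (fun j => sq_nonneg _) (fun j => ?_)
    (((((sq_shift hu 1).mul_left 2).add ((sq_shift hu (-1)).mul_left 2)).mul_right
      (((2 * dx) ^ 2)⁻¹)))
  rw [Dc, div_eq_mul_inv, mul_pow, ← inv_pow]
  rw [show ((2 * dx)⁻¹) ^ 2 = ((2 * dx) ^ 2)⁻¹ from by rw [inv_pow]]
  refine mul_le_mul_of_nonneg_right ?_ (by positivity)
  have h : u (j + -1) = u (j - 1) := by rw [show j + (-1 : ℤ) = j - 1 from by ring]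
  rw [h]
  nlinarith [sq_nonneg (u (j + 1) + u (j - 1))]

lemma sigma_skew (dx : ℝ) {u v : ℤ → ℝ} (hu : Summable fun j => u j ^ 2)
    (hv : Summable fun j => v j ^ 2) :
    ∑' j, Dc dx u j * v j = - ∑' j, Dc dx v j * u j := by
  have s1 : Summable fun j : ℤ => u (j + 1) * v j :=
    (mul_summable hu hv 1 0).congr fun j => by rw [add_zero]
  have s2 : Summable fun j : ℤ => u (j - 1) * v j :=
    (mul_summable hu hv (-1) 0).congr fun j => by rw [add_zero, ← sub_eq_add_neg]
  have s3 : Summable fun j : ℤ => v (j + 1) * u j :=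
    (mul_summable hv hu 1 0).congr fun j => by rw [add_zero]
  have s4 : Summable fun j : ℤ => v (j - 1) * u j :=
    (mul_summable hv hu (-1) 0).congr fun j => by rw [add_zero, ← sub_eq_add_neg]
  have l1 : ∑' j, Dc dx u j * v j
      = ((∑' j, u (j + 1) * v j) - ∑' j, u (j - 1) * v j) / (2 * dx) := by
    rw [← Summable.tsum_sub s1 s2, ← tsum_div_const]
    exact tsum_congr fun j => by rw [Dc]; ring
  have l2 : ∑' j, Dc dx v j * u j
      = ((∑' j, v (j + 1) * u j) - ∑' j, v (j - 1) * u j) / (2 * dx) := by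
    rw [← Summable.tsum_sub s3 s4, ← tsum_div_const]
    exact tsum_congr fun j => by rw [Dc]; ring
  have r1 : ∑' j, u (j + 1) * v j = ∑' j, v (j - 1) * u j := by
    rw [← (Equiv.addRight (1 : ℤ)).tsum_eq (fun j => v (j - 1) * u j)]
    refine tsum_congr fun j => ?_
    simp only [Equiv.coe_addRight, add_sub_cancel_right]
    ring
  have r2 : ∑' j, u (j - 1) * v j = ∑' j, v (j + 1) * u j := by
    rw [← (Equiv.subRight (1 : ℤ)).tsum_eq (fun j => v (j + 1) * u j)]
    refine tsum_congr fun j => ?_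
    simp only [Equiv.subRight_apply, sub_add_cancel]
    ring
  rw [l1, l2, r1, r2]
  ring

lemma T_expand {α dx : ℝ} (hK : Summable (Kk α)) {u v : ℤ → ℝ}
    (hu : Summable fun j => u j ^ 2) (hv : Summable fun j => v j ^ 2) :
    ∑' p : ℤ × ℤ, Dc dx u p.1 * v p.2 * Kk α (p.1 - p.2)
      = ((∑' p : ℤ × ℤ, u p.1 * v p.2 * Kk α (p.1 - p.2 + -1)) -
          ∑' p : ℤ × ℤ, u p.1 * v p.2 * Kk α (p.1 - p.2 + 1)) / (2 * dx) := by
  have s1 : Summable fun p : ℤ × ℤ => u (p.1 + 1) * v p.2 * Kk α (p.1 - p.2) :=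
    (summable_big hK (sq_shift hu 1) hv 0).congr fun p => by rw [add_zero]
  have s2 : Summable fun p : ℤ × ℤ => u (p.1 - 1) * v p.2 * Kk α (p.1 - p.2) :=
    (summable_big hK (sq_shift hu (-1)) hv 0).congr fun p => by
      rw [add_zero, ← sub_eq_add_neg]
  have e1 : ∑' p : ℤ × ℤ, u (p.1 + 1) * v p.2 * Kk α (p.1 - p.2)
      = ∑' p : ℤ × ℤ, u p.1 * v p.2 * Kk α (p.1 - p.2 + -1) := by
    rw [← (sh1 1).tsum_eq (fun p : ℤ × ℤ => u p.1 * v p.2 * Kk α (p.1 - p.2 + -1))]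
    refine tsum_congr fun p => ?_
    simp only [sh1, Equiv.coe_fn_mk]
    congr 2
    ring
  have e2 : ∑' p : ℤ × ℤ, u (p.1 - 1) * v p.2 * Kk α (p.1 - p.2)
      = ∑' p : ℤ × ℤ, u p.1 * v p.2 * Kk α (p.1 - p.2 + 1) := by
    rw [← (sh1 (-1)).tsum_eq (fun p : ℤ × ℤ => u p.1 * v p.2 * Kk α (p.1 - p.2 + 1))]
    refine tsum_congr fun p => ?_
    simp only [sh1, Equiv.coe_fn_mk]
    have h1 : p.1 + (-1 : ℤ) = p.1 - 1 := by ring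
    have h2 : p.1 - 1 - p.2 + 1 = p.1 - p.2 := by ring
    rw [h1, h2]
  rw [← e1, ← e2, ← Summable.tsum_sub s1 s2, ← tsum_div_const]
  refine tsum_congr fun p => ?_
  rw [Dc]
  ring

lemma W_comm {α : ℝ} {u v : ℤ → ℝ} (c : ℤ) :
    ∑' p : ℤ × ℤ, v p.1 * u p.2 * Kk α (p.1 - p.2 + c)
      = ∑' p : ℤ × ℤ, u p.1 * v p.2 * Kk α (p.1 - p.2 + -c) := by
  rw [← (Equiv.prodComm ℤ ℤ).tsum_eq (fun p : ℤ × ℤ => u p.1 * v p.2 * Kk α (p.1 - p.2 + -c))]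
  refine tsum_congr fun p => ?_
  simp only [Equiv.prodComm_apply, Prod.fst_swap, Prod.snd_swap]
  have hkk : Kk α (p.2 - p.1 + -c) = Kk α (p.1 - p.2 + c) := by
    rw [← Kk_neg α (p.1 - p.2 + c)]
    congr 1
    ring
  rw [hkk]
  ring

lemma T_skew {α dx : ℝ} (hK : Summable (Kk α)) {u v : ℤ → ℝ}
    (hu : Summable fun j => u j ^ 2) (hv : Summable fun j => v j ^ 2) :
    ∑' p : ℤ × ℤ, Dc dx v p.1 * u p.2 * Kk α (p.1 - p.2)
      = - ∑' p : ℤ × ℤ, Dc dx u p.1 * v p.2 * Kk α (p.1 - p.2) := by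
  have h1 := T_expand (dx := dx) hK hv hu
  have h2 := T_expand (dx := dx) hK hu hv
  have h3 := W_comm (α := α) (u := u) (v := v) (-1)
  have h4 := W_comm (α := α) (u := u) (v := v) 1
  have e3 : ∑' p : ℤ × ℤ, u p.1 * v p.2 * Kk α (p.1 - p.2 + -(-1))
      = ∑' p : ℤ × ℤ, u p.1 * v p.2 * Kk α (p.1 - p.2 + 1) :=
    tsum_congr fun p => by norm_num
  rw [h1, h2, h3, h4, e3]
  ring

/-- The discrete fractional Laplacian commutes with the central difference in the weak
sense: ⟨𝔻^α(Du), v⟩ = -⟨u, 𝔻^α(Dv)⟩ = ⟨D(𝔻^α u), v⟩. -/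
theorem fracLap_comm_central (cα α dx : ℝ) (hcα : 0 < cα) (hα : α ∈ Set.Ico (1 : ℝ) 2)
    (hdx : 0 < dx) (u v : ℤ → ℝ) (hu : Memℓp u 2) (hv : Memℓp v 2) :
    ip dx (fracLap cα α dx (Dc dx u)) v = - ip dx u (fracLap cα α dx (Dc dx v)) ∧
      ip dx (fracLap cα α dx (Dc dx u)) v = ip dx (Dc dx (fracLap cα α dx u)) v := by
  obtain ⟨hα1, hα2⟩ := hα
  have hK : Summable (Kk α) := Kk_summable α (by linarith)
  have husq : Summable fun j => u j ^ 2 := sq_of_memℓp hu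
  have hvsq : Summable fun j => v j ^ 2 := sq_of_memℓp hv
  have hDu : Summable fun j => Dc dx u j ^ 2 := sq_Dc hdx.ne' husq
  have hDv : Summable fun j => Dc dx v j ^ 2 := sq_Dc hdx.ne' hvsq
  constructor
  · rw [ip_fracLap cα α dx hK hDu hvsq, ip_comm dx u (fracLap cα α dx (Dc dx v)),
      ip_fracLap cα α dx hK hDv husq]
    have hT := T_skew (dx := dx) hK husq hvsq
    have hS := sigma_skew dx hvsq husq
    rw [hT, hS]
    ring
  · have hcomm : fracLap cα α dx (Dc dx u) = Dc dx (fracLap cα α dx u) :=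
      funext (fracLap_Dc_comm cα α dx hdx.ne' husq hK)
    rw [hcomm]
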